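/- arXiv:1409.7856 — 2 statements merged into one kernel-verified Lean document; each statement's English description precedes it below -/
import Mathlib

section
/- For a, b in a field of characteristic 3 with a ≠ 0: the polynomial z^4 + (b/a - 1/a^4)*z^3 + (b^3/a^3 + 1/a^4)*z + b^4/a^4 equals (z + α)^4 for some α if and only if a^8 = -1 and a*b^3 - a^3*b + 1 = 0 (with α = b/a - 1/a^4 up to the stated relations); in particular, under these relations the quartic in z is a fourth power of a linear polynomial. -/
open Polynomial

lemma pow4_char3 (K : Type*) [Field K] [CharP K 3] (α : K) :
    ((X + C α) ^ 4 : Polynomial K) = X ^ 4 + C α * X ^ 3 + C (α ^ 3) * X + C (α ^ 4) := by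
  have h3 : (3 : Polynomial K) = 0 := by exact_mod_cast CharP.cast_eq_zero (Polynomial K) 3
  simp only [map_pow]
  linear_combination (C α * X ^ 3 + 2 * C α ^ 2 * X ^ 2 + C α ^ 3 * X) * h3

theorem stmt_15 (K : Type*) [Field K] [CharP K 3] (a b : K) (ha : a ≠ 0) :
    (∃ α : K,
        (X ^ 4 + C (b / a - 1 / a ^ 4) * X ^ 3 + C (b ^ 3 / a ^ 3 + 1 / a ^ 4) * X
            + C (b ^ 4 / a ^ 4) : Polynomial K) = (X + C α) ^ 4) ↔
      (a ^ 8 = -1 ∧ a * b ^ 3 - a ^ 3 * b + 1 = 0) := by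
  have h3 : (3 : K) = 0 := by exact_mod_cast CharP.cast_eq_zero K 3
  constructor
  · rintro ⟨α, h⟩
    rw [pow4_char3] at h
    have e1 : b / a - 1 / a ^ 4 = α := by
      have := congrArg (fun p => Polynomial.coeff p 3) h
      simp only [coeff_add, coeff_C_mul, coeff_X_pow, coeff_C, coeff_X] at this
      norm_num at this
      simpa [one_div] using this
    have e3 : b ^ 3 / a ^ 3 + 1 / a ^ 4 = α ^ 3 := by
      have := congrArg (fun p => Polynomial.coeff p 1) h
      simp only [coeff_add, coeff_C_mul, coeff_X_pow, coeff_C, coeff_X] at this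
      norm_num at this
      simpa [one_div] using this
    have e4 : b ^ 4 / a ^ 4 = α ^ 4 := by
      have := congrArg (fun p => Polynomial.coeff p 0) h
      simp only [coeff_add, coeff_C_mul, coeff_X_pow, coeff_C, coeff_X] at this
      norm_num at this
      simpa [one_div] using this
    rw [← e1] at e3 e4
    field_simp at e3 e4
    have key : a ^ 10 * (a ^ 8 + 1) = 0 := by
      linear_combination a ^ 10 * e3 + (b * a ^ 13 - b ^ 2 * a ^ 16) * h3
    have h8 : a ^ 8 = -1 := by
      rcases mul_eq_zero.mp key with h | h
      · exact absurd h (pow_ne_zero _ ha)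
      · linear_combination h
    refine ⟨h8, ?_⟩
    linear_combination -e4 + b ^ 3 * a * h8 + (b ^ 3 * a ^ 9 + b * a ^ 3 - 2 * b ^ 2 * a ^ 6) * h3
  · rintro ⟨h8, hrel⟩
    refine ⟨b / a - 1 / a ^ 4, ?_⟩
    rw [pow4_char3]
    have e3 : b ^ 3 / a ^ 3 + 1 / a ^ 4 = (b / a - 1 / a ^ 4) ^ 3 := by
      field_simp
      ring_nf
      linear_combination h8 + (a ^ 6 * b ^ 2 - a ^ 3 * b) * h3
    have e4 : b ^ 4 / a ^ 4 = (b / a - 1 / a ^ 4) ^ 4 := by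
      field_simp
      ring_nf
      linear_combination -hrel + b ^ 3 * a * h8 + (b ^ 3 * a ^ 9 + b * a ^ 3 - 2 * b ^ 2 * a ^ 6) * h3
    rw [e3, e4]
end

section
/- For the matrix M above, the quotient group ker(I + M + M^2 + M^3) / im(M - I) is isomorphic to Z/4Z × Z/4Z. -/
open Matrix

/-- The matrix of the Frobenius action on the geometric Picard group. -/
def M : Matrix (Fin 8) (Fin 8) ℤ :=
  !![-1,  0, -1,  0, -1, -1, -1, -2;
     -1, -1, -1,  0, -1,  0, -1, -2;
      0,  0, -1,  0,  0,  0, -1, -1;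
     -1, -1, -2, -1, -1, -1, -1, -3;
      0, -1, -1,  0, -1, -1, -1, -2;
     -1, -1, -1,  0,  0, -1, -1, -2;
     -1, -1, -1, -1, -1, -1, -2, -3;
      2,  2,  3,  1,  2,  2,  3,  6]

/-- The norm map `1 + M + M² + M³` acting on `ℤ⁸`. -/
noncomputable def normMap : (Fin 8 → ℤ) →ₗ[ℤ] (Fin 8 → ℤ) :=
  Matrix.toLin' (1 + M + M ^ 2 + M ^ 3)

/-- The map `M - 1` acting on `ℤ⁸`. -/
noncomputable def diffMap : (Fin 8 → ℤ) →ₗ[ℤ] (Fin 8 → ℤ) :=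
  Matrix.toLin' (M - 1)

section Aux

variable {α : Type*} {m : ℕ}

lemma cons_val_five (x : α) (u : Fin (m + 5) → α) :
    vecCons x u 5 = vecHead (vecTail (vecTail (vecTail (vecTail u)))) := rfl

lemma cons_val_six (x : α) (u : Fin (m + 6) → α) :
    vecCons x u 6 = vecHead (vecTail (vecTail (vecTail (vecTail (vecTail u))))) := rfl

lemma cons_val_seven (x : α) (u : Fin (m + 7) → α) :
    vecCons x u 7 =
      vecHead (vecTail (vecTail (vecTail (vecTail (vecTail (vecTail u)))))) := rfl

end Aux

def Nmat : Matrix (Fin 8) (Fin 8) ℤ :=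
  !![-2,-2,-2,-2,-2,-2,-2,-6;
     -2,-2,-2,-2,-2,-2,-2,-6;
     -2,-2,-2,-2,-2,-2,-2,-6;
     -2,-2,-2,-2,-2,-2,-2,-6;
     -2,-2,-2,-2,-2,-2,-2,-6;
     -2,-2,-2,-2,-2,-2,-2,-6;
     -2,-2,-2,-2,-2,-2,-2,-6;
      6, 6, 6, 6, 6, 6, 6,18]

def Dmat : Matrix (Fin 8) (Fin 8) ℤ :=
  !![-2, 0,-1, 0,-1,-1,-1,-2;
     -1,-2,-1, 0,-1, 0,-1,-2;
      0, 0,-2, 0, 0, 0,-1,-1;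
     -1,-1,-2,-2,-1,-1,-1,-3;
      0,-1,-1, 0,-2,-1,-1,-2;
     -1,-1,-1, 0, 0,-2,-1,-2;
     -1,-1,-1,-1,-1,-1,-3,-3;
      2, 2, 3, 1, 2, 2, 3, 5]

lemma normMap_apply (x : Fin 8 → ℤ) : normMap x = Nmat.mulVec x := by
  have h : (1 + M + M ^ 2 + M ^ 3) = Nmat := by decide
  simp [normMap, h, Matrix.toLin'_apply]

lemma diffMap_apply (x : Fin 8 → ℤ) : diffMap x = Dmat.mulVec x := by
  have h : M - 1 = Dmat := by decide
  simp [diffMap, h, Matrix.toLin'_apply]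

/-- first functional: row 5 of `U·A` in the Smith normal form data. -/
def L1 (x : Fin 8 → ℤ) : ℤ := 4 * x 1 + x 2 + x 3 + x 6 + 3 * x 7
/-- second functional: row 6 of `U·A` in the Smith normal form data. -/
def L2 (x : Fin 8 → ℤ) : ℤ := -3 * x 1 - x 2 + x 3 - x 4 - 2 * x 5 - 2 * x 7

noncomputable def phi : (Fin 8 → ℤ) →ₗ[ℤ] ZMod 4 × ZMod 4 where
  toFun x := (((L1 x : ℤ) : ZMod 4), ((L2 x : ℤ) : ZMod 4))
  map_add' x y := by
    simp only [L1, L2, Pi.add_apply, Prod.mk_add_mk, Prod.mk.injEq]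
    constructor <;> push_cast <;> ring
  map_smul' c x := by
    simp only [L1, L2, Pi.smul_apply, smul_eq_mul, RingHom.id_apply, Prod.smul_mk,
      zsmul_eq_mul, Prod.mk.injEq]
    constructor <;> push_cast <;> ring

noncomputable def psi : ↥(LinearMap.ker normMap) →ₗ[ℤ] ZMod 4 × ZMod 4 :=
  phi.comp (LinearMap.ker normMap).subtype

lemma ker_rel {x : Fin 8 → ℤ} (hx : normMap x = 0) :
    x 0 + x 1 + x 2 + x 3 + x 4 + x 5 + x 6 + 3 * x 7 = 0 := by
  have h0 := congrFun (hx ▸ (normMap_apply x).symm) 0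
  simp [Nmat, Matrix.mulVec, dotProduct, Fin.sum_univ_eight,
    cons_val_five, cons_val_six, cons_val_seven] at h0
  linarith

lemma psi_ker : LinearMap.ker psi =
    Submodule.comap (LinearMap.ker normMap).subtype (LinearMap.range diffMap) := by
  ext ⟨x, hx⟩
  simp only [LinearMap.mem_ker, Submodule.mem_comap, LinearMap.mem_range,
    psi, LinearMap.comp_apply, Submodule.subtype_apply]
  constructor
  · intro h
    have h1 : ((L1 x : ℤ) : ZMod 4) = 0 := congrArg Prod.fst h
    have h2 : ((L2 x : ℤ) : ZMod 4) = 0 := congrArg Prod.snd h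
    rw [ZMod.intCast_zmod_eq_zero_iff_dvd] at h1 h2
    obtain ⟨a, ha⟩ := h1
    obtain ⟨b, hb⟩ := h2
    have hf := ker_rel (LinearMap.mem_ker.mp hx)
    simp only [L1, L2] at ha hb
    refine ⟨![(-5)*x 1 - x 2 + x 3 - x 5 - 2*x 7 + 3*a - 3*b,
              b,
              (-2)*x 1 - x 2 - x 7 + 2*a,
              0,
              -(x 1) + x 5 + 2*a + b,
              a + b,
              x 1 + x 3 + x 7 - a,
              3*x 1 + x 2 - x 3 + x 7 - 3*a], ?_⟩
    rw [diffMap_apply]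
    funext i
    fin_cases i <;>
      · simp [Dmat, Matrix.mulVec, dotProduct, Fin.sum_univ_eight,
          cons_val_five, cons_val_six, cons_val_seven]
        omega
  · rintro ⟨y, rfl⟩
    rw [diffMap_apply]
    have e1 : L1 (Dmat.mulVec y) = 4 * (y 5 - y 1) := by
      simp [L1, Dmat, Matrix.mulVec, dotProduct, Fin.sum_univ_eight,
        cons_val_five, cons_val_six, cons_val_seven]
      ring
    have e2 : L2 (Dmat.mulVec y) = 4 * (y 1 - y 3) := by
      simp [L2, Dmat, Matrix.mulVec, dotProduct, Fin.sum_univ_eight,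
        cons_val_five, cons_val_six, cons_val_seven]
      ring
    have h4 : ((4 : ℤ) : ZMod 4) = 0 := by decide
    show ((((L1 (Dmat.mulVec y) : ℤ)) : ZMod 4), ((L2 (Dmat.mulVec y) : ℤ) : ZMod 4))
        = (0 : ZMod 4 × ZMod 4)
    rw [e1, e2]
    refine Prod.ext ?_ ?_ <;>
      · push_cast
        simp [show (4 : ZMod 4) = 0 from by decide]

lemma psi_surj : Function.Surjective psi := by
  rintro ⟨a, b⟩
  set av : ℤ := (a.val : ℤ) with hav
  set bv : ℤ := (b.val : ℤ) with hbv
  refine ⟨⟨![-av + bv, 0, 0, 0, -bv, 0, av, 0], ?_⟩, ?_⟩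
  · rw [LinearMap.mem_ker, normMap_apply]
    funext i
    fin_cases i <;>
      · simp [Nmat, Matrix.mulVec, dotProduct, Fin.sum_univ_eight,
          cons_val_five, cons_val_six, cons_val_seven]
        ring
  · have e1 : L1 (![-av + bv, 0, 0, 0, -bv, 0, av, 0]) = av := by
      simp [L1, cons_val_five, cons_val_six, cons_val_seven]
    have e2 : L2 (![-av + bv, 0, 0, 0, -bv, 0, av, 0]) = bv := by
      simp [L2, cons_val_five, cons_val_six, cons_val_seven]
    simp only [psi, phi, LinearMap.comp_apply, Submodule.subtype_apply,
      LinearMap.coe_mk, AddHom.coe_mk]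
    rw [e1, e2]
    have ha : ((av : ℤ) : ZMod 4) = a := by
      rw [hav]; push_cast; simp [ZMod.natCast_val, ZMod.cast_id]
    have hb : ((bv : ℤ) : ZMod 4) = b := by
      rw [hbv]; push_cast; simp [ZMod.natCast_val, ZMod.cast_id]
    rw [ha, hb]

theorem stmt_19 :
    Nonempty
      ((↥(LinearMap.ker normMap) ⧸
          Submodule.comap (LinearMap.ker normMap).subtype (LinearMap.range diffMap))
        ≃+ (ZMod 4 × ZMod 4)) := by
  exact ⟨((Submodule.quotEquivOfEq _ _ psi_ker.symm).trans
    (psi.quotKerEquivOfSurjective psi_surj)).toAddEquiv⟩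
end
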